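/- Let R be a left-linear TRS and (A, λ, Σ_red) a complete, maximal, and core C-labeling for R. If R is outermost ground terminating, then the dynamic labeling DL(A,λ,R) is terminating on the set of correctly labeled ground terms lab(T(Σ,∅)) = { lab(t) | t ground term over Σ }. -/

import Mathlib

namespace TRSStmt

/-- First-order terms over a signature `F` with arity function `ar` and variables `V`. -/
inductive Tm (F : Type) (ar : F → ℕ) (V : Type) : Type
  | var : V → Tm F ar V
  | app : (f : F) → (Fin (ar f) → Tm F ar V) → Tm F ar V

variable {F : Type} {ar : F → ℕ} {V W A : Type}

/-- Interpretation of a term in a `Σ`-algebra, given an assignment. -/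
def Tm.eval (I : (f : F) → (Fin (ar f) → A) → A) (α : V → A) : Tm F ar V → A
  | .var x => α x
  | .app f ts => I f (fun i => (ts i).eval I α)

/-- Homomorphic extension of a substitution. -/
def Tm.subst (σ : V → Tm F ar W) : Tm F ar V → Tm F ar W
  | .var x => σ x
  | .app f ts => .app f (fun i => (ts i).subst σ)

/-- A variable occurs in a term. -/
def Tm.occurs (x : V) : Tm F ar V → Prop
  | .var y => y = x
  | .app _ ts => ∃ i, (ts i).occurs x

/-- Subterm at a position (0-indexed). -/
def Tm.subAt : Tm F ar V → List ℕ → Option (Tm F ar V)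
  | t, [] => some t
  | .var _, _ :: _ => none
  | .app f ts, i :: p => if h : i < ar f then (ts ⟨i, h⟩).subAt p else none

/-- Replace the subterm at a position. -/
def Tm.replaceAt : Tm F ar V → List ℕ → Tm F ar V → Option (Tm F ar V)
  | _, [], s => some s
  | .var _, _ :: _, _ => none
  | .app f ts, i :: p, s =>
      if h : i < ar f then
        ((ts ⟨i, h⟩).replaceAt p s).map (fun u => .app f (Function.update ts ⟨i, h⟩ u))
      else none

/-- The root symbol of a term (if any). -/
def Tm.rootSym : Tm F ar V → Option F
  | .var _ => none
  | .app f _ => some f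

/-- The function symbol at a position. -/
def Tm.symAt (t : Tm F ar V) (p : List ℕ) : Option F := (t.subAt p).bind Tm.rootSym

/-- A rewrite rule is a pair of terms. -/
abbrev Rule (F : Type) (ar : F → ℕ) (V : Type) := Tm F ar V × Tm F ar V

/-- A set of rules is a TRS: left-hand sides are no variables and
    right-hand side variables occur on the left. -/
def IsTRS (R : Set (Rule F ar V)) : Prop :=
  ∀ lr ∈ R, (∀ x : V, lr.1 ≠ Tm.var x) ∧ ∀ x : V, lr.2.occurs x → lr.1.occurs x

/-- `t` is a redex with respect to `R`. -/
def IsRedex (R : Set (Rule F ar V)) (t : Tm F ar W) : Prop :=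
  ∃ lr ∈ R, ∃ σ : V → Tm F ar W, t = lr.1.subst σ

/-- Rewrite step at position `p`. -/
def RewAt (R : Set (Rule F ar V)) (p : List ℕ) (t u : Tm F ar W) : Prop :=
  ∃ lr ∈ R, ∃ σ : V → Tm F ar W,
    t.subAt p = some (lr.1.subst σ) ∧ t.replaceAt p (lr.2.subst σ) = some u

/-- Outermost rewrite step at position `p`: no redex strictly above `p`. -/
def OutAt (R : Set (Rule F ar V)) (p : List ℕ) (t u : Tm F ar W) : Prop :=
  RewAt R p t u ∧
    ∀ q, q <+: p → q ≠ p → ∀ s, t.subAt q = some s → ¬ IsRedex R s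

/-- Outermost rewrite step. -/
def OStep (R : Set (Rule F ar V)) (t u : Tm F ar W) : Prop := ∃ p, OutAt R p t u

/-- μ-replacing positions for a replacement map `μ`. -/
inductive MuPos (μ : (f : F) → Fin (ar f) → Prop) : Tm F ar V → List ℕ → Prop
  | nil (t : Tm F ar V) : MuPos μ t []
  | cons (f : F) (ts : Fin (ar f) → Tm F ar V) (i : Fin (ar f)) (p : List ℕ) :
      μ f i → MuPos μ (ts i) p → MuPos μ (Tm.app f ts) (i.val :: p)

/-- Context-sensitive (μ-)rewrite step. -/
def MuStep (R : Set (Rule F ar V)) (μ : (f : F) → Fin (ar f) → Prop)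
    (t u : Tm F ar W) : Prop :=
  ∃ p, RewAt R p t u ∧ MuPos μ t p

/-- No infinite sequence for a relation (termination / strong normalization). -/
def NoInf {τ : Type _} (r : τ → τ → Prop) : Prop :=
  ¬ ∃ g : ℕ → τ, ∀ n, r (g n) (g (n + 1))

/-- One-hole contexts. -/
inductive Ctx (F : Type) (ar : F → ℕ) (V : Type) : Type
  | hole : Ctx F ar V
  | app : (f : F) → (i : Fin (ar f)) → ((j : Fin (ar f)) → j ≠ i → Tm F ar V) →
      Ctx F ar V → Ctx F ar V

/-- Depth of the hole of a context. -/
def Ctx.depth : Ctx F ar V → ℕ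
  | .hole => 0
  | .app _ _ _ C => C.depth + 1

/-- Filling the hole of a context with a term. -/
def Ctx.fill : Ctx F ar V → Tm F ar V → Tm F ar V
  | .hole, s => s
  | .app f i ts C, s => .app f (fun j => if h : j = i then C.fill s else ts j h)

/-- The rule `lr` preserves the interpretation inside every context of depth `n`. -/
def HoldsAtDepth (I : (f : F) → (Fin (ar f) → A) → A) (n : ℕ) (lr : Rule F ar V) : Prop :=
  ∀ (C : Ctx F ar V) (α : V → A), C.depth = n →
    (C.fill lr.1).eval I α = (C.fill lr.2).eval I α

/-- `A` is a C-model for `R`. -/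
def IsCModel (I : (f : F) → (Fin (ar f) → A) → A) (R : Set (Rule F ar V)) : Prop :=
  ∀ lr ∈ R, ∃ n, HoldsAtDepth I n lr

/-- `A` is a model for `R`. -/
def IsModel (I : (f : F) → (Fin (ar f) → A) → A) (R : Set (Rule F ar V)) : Prop :=
  ∀ lr ∈ R, ∀ α : V → A, lr.1.eval I α = lr.2.eval I α

section Label
variable {L : F → Type}

/-- Labeled signature: symbols with a label. -/
abbrev LSym (F : Type) (L : F → Type) := Σ f : F, L f

/-- Arity on the labeled signature. -/
abbrev lar (ar : F → ℕ) : LSym F L → ℕ := fun g => ar g.1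

/-- Semantic labeling of a term with respect to an assignment. -/
def labT (I : (f : F) → (Fin (ar f) → A) → A)
    (lf : ∀ f : F, (Fin (ar f) → A) → L f) (α : V → A) :
    Tm F ar V → Tm (LSym F L) (lar ar) V
  | .var x => .var x
  | .app f ts => .app ⟨f, lf f (fun i => (ts i).eval I α)⟩ (fun i => labT I lf α (ts i))

end Label

/-- Evaluation of ground terms. -/
def geval (I : (f : F) → (Fin (ar f) → A) → A) : Tm F ar Empty → A :=
  Tm.eval I (fun x => x.elim)

/-- Labeling of ground terms. -/
def glab {L : F → Type} (I : (f : F) → (Fin (ar f) → A) → A)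
    (lf : ∀ f : F, (Fin (ar f) → A) → L f) :
    Tm F ar Empty → Tm (LSym F L) (lar ar) Empty :=
  labT I lf (fun x => x.elim)

/-- Terms not containing the symbol `tp`. -/
def tpFree (tp : F) : Tm F ar V → Prop
  | .var _ => True
  | .app f ts => f ≠ tp ∧ ∀ i, tpFree tp (ts i)

/-- The term `top(s)`. -/
def topT (tp : F) (s : Tm F ar V) : Tm F ar V := Tm.app tp (fun _ => s)

/-- Number of occurrences of a variable in a term. -/
def countV [DecidableEq V] (x : V) : Tm F ar V → ℕ
  | .var y => if y = x then 1 else 0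
  | .app _ ts => ∑ i, countV x (ts i)

/-- Linear terms: every variable occurs at most once. -/
def Linear [DecidableEq V] (t : Tm F ar V) : Prop := ∀ x : V, countV x t ≤ 1

/-- Quasi-left-linear TRS. -/
def QuasiLeftLinear [DecidableEq V] (R : Set (Rule F ar V)) : Prop :=
  ∀ lr ∈ R, ¬ Linear lr.1 →
    ∃ lr' ∈ R, Linear lr'.1 ∧ ∃ σ : V → Tm F ar V, lr.1 = lr'.1.subst σ

end TRSStmt

namespace TRSStmt

variable {F : Type} {ar : F → ℕ} {V A : Type} {L : F → Type}

/-- Soundness of a C-labeling `(A, λ, Σ_red)` (with top symbol `tp`):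
    a ground `tp`-free term whose labeled root is a redex symbol is a redex. -/
def SoundLab (I : (f : F) → (Fin (ar f) → A) → A)
    (lf : ∀ f : F, (Fin (ar f) → A) → L f) (tp : F)
    (R : Set (Rule F ar V)) (Sred : Set (LSym F L)) : Prop :=
  ∀ t : Tm F ar Empty, tpFree tp t →
    ∀ g ∈ Sred, (glab I lf t).rootSym = some g → IsRedex R t

/-- Completeness of a C-labeling: every ground `tp`-free redex has its
    labeled root in `Σ_red`. -/
def CompleteLab (I : (f : F) → (Fin (ar f) → A) → A)
    (lf : ∀ f : F, (Fin (ar f) → A) → L f) (tp : F)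
    (R : Set (Rule F ar V)) (Sred : Set (LSym F L)) : Prop :=
  ∀ t : Tm F ar Empty, tpFree tp t → IsRedex R t →
    ∃ g ∈ Sred, (glab I lf t).rootSym = some g

/-- A core algebra (relative to the `tp`-free signature `Σ`):
    every element is the interpretation of a ground term over `Σ`. -/
def CoreAlg (I : (f : F) → (Fin (ar f) → A) → A) (tp : F) : Prop :=
  ∀ a : A, ∃ t : Tm F ar Empty, tpFree tp t ∧ geval I t = a

/-- Prepending the flat context `f(x₁,…,□ at i,…,xₙ)` to a term. -/
def flatExt (f : F) (i : Fin (ar f)) (xs : ∀ j : Fin (ar f), j ≠ i → V)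
    (t : Tm F ar V) : Tm F ar V :=
  Tm.app f (fun j => if h : j = i then t else Tm.var (xs j h))

/-- The iterated flat-context extension of rule–assignment pairs
    underlying the dynamic context extension `CE(A,λ,R)`. -/
inductive Reach (I : (f : F) → (Fin (ar f) → A) → A)
    (lf : ∀ f : F, (Fin (ar f) → A) → L f)
    (R : Set (Rule F ar V)) (Sred : Set (LSym F L)) :
    Tm F ar V → Tm F ar V → (V → A) → Prop
  | base (l r : Tm F ar V) (α : V → A) : (l, r) ∈ R → Reach I lf R Sred l r α
  | step (l r : Tm F ar V) (α : V → A) (f : F) (i : Fin (ar f))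
      (xs : ∀ j : Fin (ar f), j ≠ i → V) (α' : V → A) :
      Reach I lf R Sred l r α →
      (l.eval I α ≠ r.eval I α ∨ ∃ x, r = Tm.var x) →
      (∀ j h, ¬ l.occurs (xs j h)) →
      (∀ j h j' h', xs j h = xs j' h' → j = j') →
      (∀ x : V, l.occurs x → α' x = α x) →
      (∀ g ∈ Sred, (labT I lf α' (flatExt f i xs l)).rootSym ≠ some g) →
      Reach I lf R Sred (flatExt f i xs l) (flatExt f i xs r) α'

/-- The rules of the dynamic context extension `CE(A,λ,R)`:
    labelings of the fully extended rule–assignment pairs. -/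
def CE (I : (f : F) → (Fin (ar f) → A) → A)
    (lf : ∀ f : F, (Fin (ar f) → A) → L f)
    (R : Set (Rule F ar V)) (Sred : Set (LSym F L)) :
    Set (Rule (LSym F L) (lar ar) V) :=
  { p | ∃ (l r : Tm F ar V) (α : V → A),
      Reach I lf R Sred l r α ∧ l.eval I α = r.eval I α ∧ (∀ x : V, r ≠ Tm.var x) ∧
      p = (labT I lf α l, labT I lf α r) }

/-- The replacement map of the transformed system:
    all arguments of redex symbols are frozen. -/
def ceMu (Sred : Set (LSym F L)) : (g : LSym F L) → Fin (lar ar g) → Prop :=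
  fun g _ => g ∉ Sred

/-- Outermost ground termination of `R` over the `tp`-free signature `Σ`. -/
def OGTtp (R : Set (Rule F ar V)) (tp : F) : Prop :=
  ¬ ∃ g : ℕ → Tm F ar Empty,
      (∀ n, tpFree tp (g n)) ∧ ∀ n, OStep R (g n) (g (n + 1))

end TRSStmt

namespace TRSStmt

variable {F : Type} {ar : F → ℕ} {V A : Type} {L : F → Type}

/-- Closure generating the value-change pairs (before removing diagonal pairs). -/
inductive VCpre (I : (f : F) → (Fin (ar f) → A) → A)
    (lf : ∀ f : F, (Fin (ar f) → A) → L f)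
    (R : Set (Rule F ar V)) (Sred : Set (LSym F L)) : A → A → Prop
  | base (lr : Rule F ar V) (hlr : lr ∈ R) (α : V → A)
      (hne : lr.1.eval I α ≠ lr.2.eval I α) :
      VCpre I lf R Sred (lr.1.eval I α) (lr.2.eval I α)
  | step (b b' : A) (h : VCpre I lf R Sred b b') (f : F)
      (as : Fin (ar f) → A) (i : Fin (ar f)) (hi : as i = b)
      (hred : (⟨f, lf f as⟩ : LSym F L) ∉ Sred) :
      VCpre I lf R Sred (I f as) (I f (Function.update as i b'))

/-- The set of value-change pairs `VC(λ,R)` (diagonal pairs removed). -/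
def VC (I : (f : F) → (Fin (ar f) → A) → A)
    (lf : ∀ f : F, (Fin (ar f) → A) → L f)
    (R : Set (Rule F ar V)) (Sred : Set (LSym F L)) (b b' : A) : Prop :=
  VCpre I lf R Sred b b' ∧ b ≠ b'

/-- The relation `⤳` on value-change pairs. -/
def Lead (I : (f : F) → (Fin (ar f) → A) → A)
    (lf : ∀ f : F, (Fin (ar f) → A) → L f)
    (R : Set (Rule F ar V)) (Sred : Set (LSym F L)) (p q : A × A) : Prop :=
  VC I lf R Sred p.1 p.2 ∧ VC I lf R Sred q.1 q.2 ∧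
  ∃ (f : F) (as : Fin (ar f) → A) (i : Fin (ar f)),
    as i = p.1 ∧ (⟨f, lf f as⟩ : LSym F L) ∉ Sred ∧
    q.1 = I f as ∧ q.2 = I f (Function.update as i p.2)

end TRSStmt

namespace TRSStmt

variable {F : Type} {ar : F → ℕ} {A : Type} {L : F → Type}

/-- The signature of the dynamic labeling: labeled symbols plus the
    fresh unary relabel symbols `∇_{a,a'}`. -/
abbrev DSym (F : Type) (L : F → Type) (A : Type) := LSym F L ⊕ (A × A)

/-- Arities for the dynamic labeling signature. -/
abbrev dar (ar : F → ℕ) : DSym F L A → ℕ := Sum.elim (lar ar) (fun _ => 1)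

/-- Inclusion of labeled terms into terms over the dynamic labeling signature. -/
def embL {W : Type} : Tm (LSym F L) (lar ar) W → Tm (DSym F L A) (dar ar) W
  | .var x => .var x
  | .app g ts => .app (Sum.inl g) (fun i => embL (ts i))

/-- `∇_{b,b'}(t)`. -/
def nabla {W : Type} (b b' : A) (t : Tm (DSym F L A) (dar ar) W) :
    Tm (DSym F L A) (dar ar) W :=
  Tm.app (Sum.inr (b, b')) (fun _ => t)

/-- The labeled original rules of the dynamic labeling `DL(A,λ,R)`. -/
def DLorg (I : (f : F) → (Fin (ar f) → A) → A)
    (lf : ∀ f : F, (Fin (ar f) → A) → L f)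
    (R : Set (Rule F ar ℕ)) : Set (Rule (DSym F L A) (dar ar) ℕ) :=
  { p | ∃ lr ∈ R, ∃ α : ℕ → A,
      p.1 = embL (labT I lf α lr.1) ∧
      ((lr.1.eval I α = lr.2.eval I α ∧ p.2 = embL (labT I lf α lr.2)) ∨
       (lr.1.eval I α ≠ lr.2.eval I α ∧
         p.2 = nabla (lr.1.eval I α) (lr.2.eval I α) (embL (labT I lf α lr.2)))) }

/-- The relabeling rules of the dynamic labeling `DL(A,λ,R)`. -/
def DLprp (I : (f : F) → (Fin (ar f) → A) → A)
    (lf : ∀ f : F, (Fin (ar f) → A) → L f)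
    (R : Set (Rule F ar ℕ)) (Sred : Set (LSym F L)) :
    Set (Rule (DSym F L A) (dar ar) ℕ) :=
  { p | ∃ (f : F) (as : Fin (ar f) → A) (i : Fin (ar f)) (b b' : A),
      VC I lf R Sred b b' ∧ as i = b ∧
      (⟨f, lf f as⟩ : LSym F L) ∉ Sred ∧
      p.1 = Tm.app (Sum.inl (⟨f, lf f as⟩ : LSym F L))
              (fun j => if j = i then nabla b b' (Tm.var (j : ℕ)) else Tm.var (j : ℕ)) ∧
      ((I f as = I f (Function.update as i b') ∧
         p.2 = Tm.app (Sum.inl (⟨f, lf f (Function.update as i b')⟩ : LSym F L))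
                 (fun j => Tm.var (j : ℕ))) ∨
       (I f as ≠ I f (Function.update as i b') ∧
         p.2 = nabla (I f as) (I f (Function.update as i b'))
                 (Tm.app (Sum.inl (⟨f, lf f (Function.update as i b')⟩ : LSym F L))
                    (fun j => Tm.var (j : ℕ))))) }

/-- The replacement map of the dynamic labeling: all arguments of `∇`-symbols
    and of redex symbols are frozen. -/
def dlMu (Sred : Set (LSym F L)) : (g : DSym F L A) → Fin (dar ar g) → Prop :=
  fun g _ => match g with
    | Sum.inl h => h ∉ Sred
    | Sum.inr _ => False

/-- `n`-fold composition of a relation. -/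
def itN {τ : Type _} (r : τ → τ → Prop) : ℕ → τ → τ → Prop
  | 0 => fun a b => a = b
  | n + 1 => fun a c => ∃ b, r a b ∧ itN r n b c

end TRSStmt

namespace TRSStmt

section Basics

variable {F : Type} {ar : F → ℕ} {V W A : Type}

theorem occurs_iff_countV [DecidableEq V] (x : V) (t : Tm F ar V) :
    t.occurs x ↔ 1 ≤ countV x t := by
  induction t with
  | var y =>
    by_cases h : y = x <;> simp [Tm.occurs, countV, h]
  | app f ts ih =>
    simp only [Tm.occurs, countV]
    constructor
    · rintro ⟨i, hi⟩
      have := (ih i).mp hi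
      calc 1 ≤ countV x (ts i) := this
        _ ≤ ∑ j, countV x (ts j) :=
          Finset.single_le_sum (f := fun j => countV x (ts j))
            (fun j _ => Nat.zero_le _) (Finset.mem_univ i)
    · intro h
      by_contra hc
      push_neg at hc
      have : ∀ j ∈ Finset.univ, countV x (ts j) = 0 := by
        intro j _
        have := hc j
        rw [ih j] at this
        omega
      rw [Finset.sum_eq_zero this] at h
      omega

theorem Tm.eval_congr (I : (f : F) → (Fin (ar f) → A) → A) {α β : V → A} :
    ∀ t : Tm F ar V, (∀ x, t.occurs x → α x = β x) → t.eval I α = t.eval I β := by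
  intro t
  induction t with
  | var x => intro h; exact h x rfl
  | app f ts ih =>
    intro h
    simp only [Tm.eval]
    congr 1
    funext i
    exact ih i (fun x hx => h x ⟨i, hx⟩)

theorem Tm.subst_congr {σ σ' : V → Tm F ar W} :
    ∀ t : Tm F ar V, (∀ x, t.occurs x → σ x = σ' x) → t.subst σ = t.subst σ' := by
  intro t
  induction t with
  | var x => intro h; exact h x rfl
  | app f ts ih =>
    intro h
    simp only [Tm.subst]
    congr 1
    funext i
    exact ih i (fun x hx => h x ⟨i, hx⟩)

theorem Tm.eval_subst (I : (f : F) → (Fin (ar f) → A) → A) (σ : V → Tm F ar W) (β : W → A) :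
    ∀ t : Tm F ar V, (t.subst σ).eval I β = t.eval I (fun x => (σ x).eval I β) := by
  intro t
  induction t with
  | var x => rfl
  | app f ts ih =>
    simp only [Tm.subst, Tm.eval]
    congr 1
    funext i
    exact ih i

theorem geval_subst (I : (f : F) → (Fin (ar f) → A) → A) (σ : V → Tm F ar Empty)
    (t : Tm F ar V) : geval I (t.subst σ) = t.eval I (fun x => geval I (σ x)) := by
  unfold geval
  exact Tm.eval_subst I σ _ t

theorem geval_subst_eq (I : (f : F) → (Fin (ar f) → A) → A) (σ : V → Tm F ar Empty)
    {α : V → A} (t : Tm F ar V) (h : ∀ x, t.occurs x → geval I (σ x) = α x) :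
    geval I (t.subst σ) = t.eval I α := by
  rw [geval_subst]
  exact Tm.eval_congr I t h

theorem tpFree_subAt {tp : F} : ∀ (p : List ℕ) (t s : Tm F ar V),
    tpFree tp t → t.subAt p = some s → tpFree tp s := by
  intro p
  induction p with
  | nil =>
    intro t s ht h
    simp only [Tm.subAt] at h
    cases h
    exact ht
  | cons i p ih =>
    intro t s ht h
    cases t with
    | var x => simp [Tm.subAt] at h
    | app f ts =>
      simp only [Tm.subAt] at h
      split at h
      · exact ih _ _ (ht.2 _) h
      · exact absurd h (by simp)

theorem tpFree_subst {tp : F} {σ : V → Tm F ar W} :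
    ∀ t : Tm F ar V, tpFree tp t → (∀ x, t.occurs x → tpFree tp (σ x)) →
    tpFree tp (t.subst σ) := by
  intro t
  induction t with
  | var x => intro _ h; exact h x rfl
  | app f ts ih =>
    intro ht h
    exact ⟨ht.1, fun i => ih i (ht.2 i) (fun x hx => h x ⟨i, hx⟩)⟩

theorem subAt_append : ∀ (p q : List ℕ) (t : Tm F ar V),
    t.subAt (p ++ q) = (t.subAt p).bind (Tm.subAt · q) := by
  intro p
  induction p with
  | nil => intro q t; simp [Tm.subAt]
  | cons i p ih =>
    intro q t
    cases t with
    | var x => simp [Tm.subAt]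
    | app f ts =>
      simp only [List.cons_append, Tm.subAt]
      split
      · exact ih q _
      · simp

theorem replaceAt_self : ∀ (p : List ℕ) (t w : Tm F ar V),
    t.subAt p = some w → t.replaceAt p w = some t := by
  intro p
  induction p with
  | nil =>
    intro t w h
    simp only [Tm.subAt] at h
    cases h
    simp [Tm.replaceAt]
  | cons i p ih =>
    intro t w h
    cases t with
    | var x => simp [Tm.subAt] at h
    | app f ts =>
      simp only [Tm.subAt] at h
      simp only [Tm.replaceAt]
      split at h
      next hlt =>
        simp only [dif_pos hlt, ih _ _ h, Option.map_some]
        rw [Function.update_eq_self]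
      next => exact absurd h (by simp)

theorem replaceAt_append : ∀ (p q : List ℕ) (t w w' t' : Tm F ar V) (v : Tm F ar V),
    t.subAt p = some w → w.replaceAt q v = some w' → t.replaceAt p w' = some t' →
    t.replaceAt (p ++ q) v = some t' := by
  intro p
  induction p with
  | nil =>
    intro q t w w' t' v h1 h2 h3
    simp only [Tm.subAt] at h1
    simp only [Tm.replaceAt] at h3
    cases h1
    cases h3
    exact h2
  | cons i p ih =>
    intro q t w w' t' v h1 h2 h3
    cases t with
    | var x => simp [Tm.subAt] at h1
    | app f ts =>
      simp only [Tm.subAt] at h1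
      simp only [List.cons_append, Tm.replaceAt] at h3 ⊢
      split at h1
      next hlt =>
        rw [dif_pos hlt] at h3 ⊢
        obtain ⟨u', hu', hmap⟩ := Option.map_eq_some_iff.mp h3
        have := ih q _ _ _ _ _ h1 h2 hu'
        rw [this, Option.map_some, hmap]
      next => exact absurd h1 (by simp)

end Basics

end TRSStmt
namespace TRSStmt

section LC

variable {F : Type} {ar : F → ℕ} {A : Type} {W : Type} {L : F → Type}

/-- Count of "live" labeled nodes: nodes with a labeled symbol at the root,
    not below any `∇`. -/
def lc : Tm (DSym F L A) (dar ar) W → ℕ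
  | .var _ => 0
  | .app (Sum.inl _) ts => 1 + ∑ i, lc (ts i)
  | .app (Sum.inr _) _ => 0

theorem lc_update {n : ℕ} (ts : Fin n → Tm (DSym F L A) (dar ar) W)
    (i : Fin n) (u : Tm (DSym F L A) (dar ar) W) :
    ∑ j, lc (Function.update ts i u j) + lc (ts i) = ∑ j, lc (ts j) + lc u := by
  have h1 : ∀ j, lc (Function.update ts i u j) =
      Function.update (fun j => lc (ts j)) i (lc u) j := by
    intro j
    rcases eq_or_ne j i with h | h
    · subst h
      rw [Function.update_self, Function.update_self]
    · rw [Function.update_of_ne h, Function.update_of_ne h]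
  rw [Finset.sum_congr rfl (fun j _ => h1 j)]
  rw [Finset.sum_update_of_mem (Finset.mem_univ i)]
  have h2 : ∑ j, lc (ts j) = lc (ts i) + ∑ j ∈ Finset.univ \ {i}, lc (ts j) := by
    rw [Finset.sdiff_singleton_eq_erase]
    exact (Finset.add_sum_erase Finset.univ _ (Finset.mem_univ i)).symm
  omega

theorem lc_replace {Sred : Set (LSym F L)} :
    ∀ {t : Tm (DSym F L A) (dar ar) W} {p}, MuPos (dlMu Sred) t p →
    ∀ {w a t' : Tm (DSym F L A) (dar ar) W}, t.subAt p = some w → t.replaceAt p a = some t' →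
    lc t' + lc w = lc t + lc a := by
  intro t p hp
  induction hp with
  | nil t =>
    intro w a t' h1 h2
    simp only [Tm.subAt] at h1
    simp only [Tm.replaceAt] at h2
    cases h1; cases h2
    omega
  | cons f ts i p hμ hp ih =>
    intro w a t' h1 h2
    cases f with
    | inr g => exact absurd hμ (by simp [dlMu])
    | inl g =>
      simp only [Tm.subAt, dif_pos i.isLt, Fin.eta] at h1
      simp only [Tm.replaceAt, dif_pos i.isLt, Fin.eta] at h2
      obtain ⟨u', hu', hmap⟩ := Option.map_eq_some_iff.mp h2
      have key := ih h1 hu'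
      subst hmap
      have hup := lc_update (A := A) ts i u'
      simp only [lc]
      omega

end LC

section Rep

variable {F : Type} {ar : F → ℕ} {A : Type}
variable (I : (f : F) → (Fin (ar f) → A) → A) (tp : F) (R : Set (Rule F ar ℕ))

/-- Simulation invariant: the dynamic-labeling term `t` is represented by the
    "shadow" ground term `s`; labels in `t` agree with values of the shadow,
    and each `∇`-node stores a pending outermost step of the shadow. -/
inductive Rep : Tm (DSym F (fun f => Fin (ar f) → A) A) (dar ar) Empty → Tm F ar Empty → Prop where
  | node : ∀ (f : F) (as : Fin (ar f) → A)
      (ts : Fin (ar f) → Tm (DSym F (fun f => Fin (ar f) → A) A) (dar ar) Empty)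
      (ss : Fin (ar f) → Tm F ar Empty),
      f ≠ tp → (∀ i, Rep (ts i) (ss i)) → (∀ i, as i = geval I (ss i)) →
      Rep (.app (Sum.inl ⟨f, as⟩) ts) (.app f ss)
  | nab : ∀ (b b' : A)
      (ts : Fin 1 → Tm (DSym F (fun f => Fin (ar f) → A) A) (dar ar) Empty)
      (s s' : Tm F ar Empty) (p₀ : List ℕ),
      OutAt R p₀ s s' → Rep (ts 0) s' → geval I s' = b' → tpFree tp s →
      Rep (.app (Sum.inr (b, b')) ts) s

variable {I} {tp} {R}

theorem Rep_tpFree : ∀ {t s}, Rep I tp R t s → tpFree tp s := by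
  intro t s h
  induction h with
  | node f as ts ss hne hrep hlab ih => exact ⟨hne, fun i => ih i⟩
  | nab b b' ts s s' p₀ hout hrep hval htf ih => exact htf

theorem geval_of_Rep_node : ∀ {f as ts s}, Rep I tp R (.app (Sum.inl ⟨f, as⟩) ts) s →
    geval I s = I f as := by
  intro f as ts s h
  cases h with
  | node f as ts ss hne hrep hlab =>
    show I f (fun i => geval I (ss i)) = I f as
    congr 1
    funext i
    exact (hlab i).symm

theorem nonredex_of_Rep {Sred : Set (LSym F (fun f => Fin (ar f) → A))}
    (hcomplete : CompleteLab I (fun _ a => a) tp R Sred)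
    {f : F} {as ts s} (h : Rep I tp R (.app (Sum.inl ⟨f, as⟩) ts) s)
    (hS : (⟨f, as⟩ : LSym F (fun f => Fin (ar f) → A)) ∉ Sred) : ¬ IsRedex R s := by
  intro hred
  cases h with
  | node f as ts ss hne hrep hlab =>
    have htf : tpFree tp (Tm.app f ss) := by
      simp only [tpFree]
      exact ⟨hne, fun i => Rep_tpFree (hrep i)⟩
    obtain ⟨g, hg, hroot⟩ := hcomplete _ htf hred
    simp only [glab, labT, Tm.rootSym, Option.some.injEq] at hroot
    have : (⟨f, as⟩ : LSym F (fun f => Fin (ar f) → A)) = g := by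
      rw [← hroot]
      congr 1
      funext i
      exact hlab i
    exact hS (this ▸ hg)

theorem Rep_subAt {Sred : Set (LSym F (fun f => Fin (ar f) → A))} :
    ∀ {t p}, MuPos (dlMu Sred) t p → ∀ {s w}, Rep I tp R t s →
    t.subAt p = some w → ∃ sp, s.subAt p = some sp ∧ Rep I tp R w sp := by
  intro t p hp
  induction hp with
  | nil t =>
    intro s w hrep h
    simp only [Tm.subAt] at h
    cases h
    exact ⟨s, by simp [Tm.subAt], hrep⟩
  | cons f ts i p hμ hp ih =>
    intro s w hrep h
    cases hrep with
    | node f' as' ts' ss' hne hr hl =>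
      simp only [Tm.subAt, dif_pos i.isLt, Fin.eta] at h
      obtain ⟨sp, hsp, hrsp⟩ := ih (hr i) h
      refine ⟨sp, ?_, hrsp⟩
      have hlt : (i : ℕ) < ar f' := i.isLt
      simp only [Tm.subAt, dif_pos hlt, Fin.eta]
      exact hsp
    | nab b b' ts0 s0 s0' p₀ hout hrep0 hval htf =>
      exact absurd hμ (by simp [dlMu])

theorem nonredex_above {Sred : Set (LSym F (fun f => Fin (ar f) → A))}
    (hcomplete : CompleteLab I (fun _ a => a) tp R Sred) :
    ∀ {t p}, MuPos (dlMu Sred) t p → ∀ {s}, Rep I tp R t s →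
    ∀ q, q <+: p → q ≠ p → ∀ sq, s.subAt q = some sq → ¬ IsRedex R sq := by
  intro t p hp
  induction hp with
  | nil t =>
    intro s hrep q hq hne sq hsq
    exact absurd (List.prefix_nil.mp hq) hne
  | cons f ts i p hμ hp ih =>
    intro s hrep q hq hne sq hsq
    cases hrep with
    | node f' as' ts' ss' hne' hr hl =>
      cases q with
      | nil =>
        simp only [Tm.subAt] at hsq
        cases hsq
        have hS : (⟨f', as'⟩ : LSym F (fun f => Fin (ar f) → A)) ∉ Sred := hμ
        exact nonredex_of_Rep hcomplete (Rep.node f' as' ts' ss' hne' hr hl) hS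
      | cons j q' =>
        obtain ⟨hj, hq'⟩ := List.cons_prefix_cons.mp hq
        subst hj
        have hlt : (i : ℕ) < ar f' := i.isLt
        simp only [Tm.subAt, dif_pos hlt, Fin.eta] at hsq
        exact ih (hr i) q' hq' (fun hc => hne (by rw [hc])) sq hsq
    | nab b b' ts0 s0 s0' p₀ hout hrep0 hval htf =>
      exact absurd hμ (by simp [dlMu])

theorem Rep_replace {Sred : Set (LSym F (fun f => Fin (ar f) → A))} :
    ∀ {t p}, MuPos (dlMu Sred) t p → ∀ {s a t' sp b'},
    Rep I tp R t s → t.replaceAt p a = some t' →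
    s.subAt p = some sp →
    Rep I tp R a b' → geval I b' = geval I sp →
    ∃ s', s.replaceAt p b' = some s' ∧ Rep I tp R t' s' ∧ geval I s' = geval I s := by
  intro t p hp
  induction hp with
  | nil t =>
    intro s a t' sp b' hrep hrt hsp hra hgev
    simp only [Tm.replaceAt] at hrt
    simp only [Tm.subAt] at hsp
    cases hrt; cases hsp
    exact ⟨b', by simp [Tm.replaceAt], hra, hgev⟩
  | cons f ts i p hμ hp ih =>
    intro s a t' sp b' hrep hrt hsp hra hgev
    cases hrep with
    | node f' as' ts' ss' hne hr hl =>
      simp only [Tm.replaceAt, dif_pos i.isLt, Fin.eta] at hrt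
      obtain ⟨u', hu', hmap⟩ := Option.map_eq_some_iff.mp hrt
      subst hmap
      have hlt : (i : ℕ) < ar f' := i.isLt
      simp only [Tm.subAt, dif_pos hlt, Fin.eta] at hsp
      obtain ⟨si', hsi', hrsi', hgev'⟩ := ih (hr i) hu' hsp hra hgev
      refine ⟨.app f' (Function.update ss' i si'), ?_, ?_, ?_⟩
      · simp only [Tm.replaceAt, dif_pos hlt, Fin.eta, hsi', Option.map_some]
        rw [show (⟨(i : ℕ), hlt⟩ : Fin (ar f')) = i from Fin.eta i hlt, hsi', Option.map_some]
      · refine Rep.node f' as' _ _ hne ?_ ?_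
        · intro j
          rcases eq_or_ne j i with hji | hji
          · subst hji
            rw [Function.update_self]
            convert hrsi' using 2 <;> exact Function.update_self _ _ _
          · rw [Function.update_of_ne hji]
            convert hr j using 2 <;> exact Function.update_of_ne hji _ _
        · intro j
          rcases eq_or_ne j i with hji | hji
          · subst hji
            simp only [Function.update_self]
            rw [hl j]
            exact hgev'.symm
          · simp only [Function.update_of_ne hji]
            exact hl j
      · show I f' (fun j => geval I (Function.update ss' i si' j)) = I f' (fun j => geval I (ss' j))
        congr 1
        funext j
        rcases eq_or_ne j i with hji | hji
        · subst hji
          simp only [Function.update_self]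
          exact hgev'
        · simp [Function.update_of_ne hji]
    | nab b b' ts0 s0 s0' p₀ hout hrep0 hval htf =>
      exact absurd hμ (by simp [dlMu])

end Rep

end TRSStmt
namespace TRSStmt

section Match

variable {F : Type} {ar : F → ℕ} {A : Type}
variable {I : (f : F) → (Fin (ar f) → A) → A} {tp : F} {R : Set (Rule F ar ℕ)}

theorem Linear_child {V : Type} [DecidableEq V] {f : F} {ts : Fin (ar f) → Tm F ar V}
    (h : Linear (Tm.app f ts)) (i : Fin (ar f)) : Linear (ts i) := by
  intro x
  have h1 : countV x (ts i) ≤ ∑ j, countV x (ts j) :=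
    Finset.single_le_sum (f := fun j => countV x (ts j))
      (fun j _ => Nat.zero_le _) (Finset.mem_univ i)
  have h2 := h x
  simp only [countV] at h2
  omega

theorem prefix_append_cases : ∀ (p : List ℕ) {q r : List ℕ}, q <+: p ++ r →
    q <+: p ∨ ∃ q', q = p ++ q' ∧ q' <+: r := by
  intro p
  induction p with
  | nil => intro q r h; exact Or.inr ⟨q, rfl, h⟩
  | cons a p ih =>
    intro q r h
    cases q with
    | nil => exact Or.inl (List.nil_prefix)
    | cons b q' =>
      rw [List.cons_append] at h
      obtain ⟨hb, hq'⟩ := List.cons_prefix_cons.mp h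
      subst hb
      rcases ih hq' with h1 | ⟨q'', hq'', hpre⟩
      · exact Or.inl (List.cons_prefix_cons.mpr ⟨rfl, h1⟩)
      · exact Or.inr ⟨q'', by rw [hq'', List.cons_append], hpre⟩

theorem Rep_build : ∀ (m : Tm F ar ℕ) (σ : ℕ → Tm (DSym F (fun f => Fin (ar f) → A) A) (dar ar) Empty)
    (τ : ℕ → Tm F ar Empty) (α : ℕ → A),
    tpFree tp m →
    (∀ x, m.occurs x → Rep I tp R (σ x) (τ x) ∧ geval I (τ x) = α x) →
    Rep I tp R ((embL (labT I (fun _ a => a) α m)).subst σ) (m.subst τ) := by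
  intro m
  induction m with
  | var x =>
    intro σ τ α htf h
    simp only [labT, embL, Tm.subst]
    exact (h x rfl).1
  | app f ms ih =>
    intro σ τ α htf h
    simp only [labT, embL, Tm.subst]
    refine Rep.node f _ _ _ htf.1 ?_ ?_
    · intro i
      exact ih i σ τ α (htf.2 i) (fun x hx => h x ⟨i, hx⟩)
    · intro i
      exact (geval_subst_eq I τ (ms i) (fun x hx => (h x ⟨i, hx⟩).2)).symm

theorem Rep_decomp : ∀ (m : Tm F ar ℕ) {σ : ℕ → Tm (DSym F (fun f => Fin (ar f) → A) A) (dar ar) Empty}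
    {s : Tm F ar Empty} {α : ℕ → A},
    Linear m →
    Rep I tp R ((embL (labT I (fun _ a => a) α m)).subst σ) s →
    geval I s = m.eval I α →
    ∃ τ : ℕ → Tm F ar Empty, s = m.subst τ ∧
      ∀ x, m.occurs x → Rep I tp R (σ x) (τ x) ∧ geval I (τ x) = α x := by
  intro m
  induction m with
  | var x =>
    intro σ s α hlin hrep hval
    refine ⟨fun _ => s, rfl, ?_⟩
    intro z hz
    have hz' : x = z := hz
    subst hz'
    simp only [labT, embL, Tm.subst] at hrep
    exact ⟨hrep, hval⟩
  | app f ms ih =>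
    intro σ s α hlin hrep hval
    simp only [labT, embL, Tm.subst] at hrep
    cases hrep with
    | node f1 as1 ts1 ss1 hne hr hl =>
      have hIH : ∀ i, ∃ τ : ℕ → Tm F ar Empty, ss1 i = (ms i).subst τ ∧
          ∀ x, (ms i).occurs x → Rep I tp R (σ x) (τ x) ∧ geval I (τ x) = α x := by
        intro i
        exact ih i (Linear_child hlin i) (hr i) (hl i).symm
      choose τs hsub hocc using hIH
      classical
      refine ⟨fun x => if h : ∃ i, (ms i).occurs x then τs h.choose x else Tm.app f ss1, ?_, ?_⟩
      · show Tm.app f ss1 = Tm.app f (fun i => (ms i).subst _)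
        congr 1
        funext i
        rw [hsub i]
        refine Tm.subst_congr (ms i) ?_
        intro x hx
        have hex : ∃ j, (ms j).occurs x := ⟨i, hx⟩
        simp only [dif_pos hex]
        have hchoose : hex.choose = i := by
          by_contra hc
          have h1 : 1 ≤ countV x (ms hex.choose) := (occurs_iff_countV x _).mp hex.choose_spec
          have h2 : 1 ≤ countV x (ms i) := (occurs_iff_countV x _).mp hx
          have h3 := hlin x
          simp only [countV] at h3
          have h4 : countV x (ms hex.choose) + countV x (ms i) ≤ ∑ j, countV x (ms j) := by
            have key := Finset.add_sum_erase Finset.univ (fun j => countV x (ms j))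
              (Finset.mem_univ hex.choose)
            have h5 : countV x (ms i) ≤ ∑ j ∈ Finset.univ.erase hex.choose, countV x (ms j) :=
              Finset.single_le_sum (f := fun j => countV x (ms j))
                (fun j _ => Nat.zero_le _) (Finset.mem_erase.mpr ⟨fun hc2 => hc (hc2.symm ▸ rfl), Finset.mem_univ i⟩)
            omega
          omega
        rw [hchoose]
      · rintro x ⟨i, hx⟩
        have hex : ∃ j, (ms j).occurs x := ⟨i, hx⟩
        simp only [dif_pos hex]
        have hchoose : hex.choose = i := by
          by_contra hc
          have h1 : 1 ≤ countV x (ms hex.choose) := (occurs_iff_countV x _).mp hex.choose_spec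
          have h2 : 1 ≤ countV x (ms i) := (occurs_iff_countV x _).mp hx
          have h3 := hlin x
          simp only [countV] at h3
          have h4 : countV x (ms hex.choose) + countV x (ms i) ≤ ∑ j, countV x (ms j) := by
            have key := Finset.add_sum_erase Finset.univ (fun j => countV x (ms j))
              (Finset.mem_univ hex.choose)
            have h5 : countV x (ms i) ≤ ∑ j ∈ Finset.univ.erase hex.choose, countV x (ms j) :=
              Finset.single_le_sum (f := fun j => countV x (ms j))
                (fun j _ => Nat.zero_le _) (Finset.mem_erase.mpr ⟨fun hc2 => hc (hc2.symm ▸ rfl), Finset.mem_univ i⟩)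
            omega
          omega
        rw [hchoose]
        exact hocc i x hx

theorem Rep_lab : ∀ (t : Tm F ar Empty), tpFree tp t →
    Rep I tp R (embL (glab I (fun _ a => a) t)) t := by
  intro t
  induction t with
  | var x => exact x.elim
  | app f ts ih =>
    intro htf
    show Rep I tp R (embL (labT I (fun _ a => a) (fun x => x.elim) (Tm.app f ts))) (Tm.app f ts)
    simp only [labT, embL]
    exact Rep.node f _ _ _ htf.1 (fun i => ih i (htf.2 i)) (fun i => rfl)

end Match

end TRSStmt
namespace TRSStmt

section Sim

variable {F : Type} {ar : F → ℕ} {A : Type}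
variable {I : (f : F) → (Fin (ar f) → A) → A} {tp : F} {R : Set (Rule F ar ℕ)}
variable {Sred : Set (LSym F (fun f => Fin (ar f) → A))}

theorem Sim
    (hTRS : IsTRS R)
    (hRtp : ∀ lr ∈ R, tpFree tp lr.1 ∧ tpFree tp lr.2)
    (hll : ∀ lr ∈ R, Linear lr.1)
    (hcomplete : CompleteLab I (fun _ a => a) tp R Sred)
    {t u : Tm (DSym F (fun f => Fin (ar f) → A) A) (dar ar) Empty} {s : Tm F ar Empty}
    (hrep : Rep I tp R t s)
    (hstep : MuStep (DLorg I (fun _ a => a) R ∪ DLprp I (fun _ a => a) R Sred)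
      (dlMu Sred) t u) :
    ∃ s', Rep I tp R u s' ∧ (OStep R s s' ∨ (s' = s ∧ lc u < lc t)) := by
  obtain ⟨p, ⟨lr, hlr, σ, hsub, hrepl⟩, hmu⟩ := hstep
  obtain ⟨sp, hsp, hrsp⟩ := Rep_subAt hmu hrep hsub
  rcases hlr with hlr | hlr
  · -- DLorg step
    obtain ⟨lr0, hlr0, α, hl1, hcase⟩ := hlr
    have hlnv := (hTRS lr0 hlr0).1
    have hvars := (hTRS lr0 hlr0).2
    obtain ⟨f, ls, hL⟩ : ∃ f ls, lr0.1 = Tm.app f ls := by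
      cases hv : lr0.1 with
      | var x => exact absurd hv (hlnv x)
      | app f ls => exact ⟨f, ls, rfl⟩
    have hrsp' : Rep I tp R ((embL (labT I (fun _ a => a) α lr0.1)).subst σ) sp := by
      rw [← hl1]; exact hrsp
    have hgsp : geval I sp = lr0.1.eval I α := by
      rw [hL]
      have hrsp'' : Rep I tp R
          (Tm.app (Sum.inl ⟨f, fun i => (ls i).eval I α⟩)
            (fun i => (embL (labT I (fun _ a => a) α (ls i))).subst σ)) sp := by
        have := hrsp'
        rw [hL] at this
        simpa only [labT, embL, Tm.subst] using this
      exact geval_of_Rep_node hrsp''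
    obtain ⟨τ, hsps, hocc⟩ := Rep_decomp lr0.1 (hll lr0 hlr0) hrsp' hgsp
    rcases hcase with ⟨heq, hl2⟩ | ⟨hvne, hl2⟩
    · -- value-preserving rule application: genuine outermost step of the shadow
      have hra : Rep I tp R (lr.2.subst σ) (lr0.2.subst τ) := by
        rw [hl2]
        exact Rep_build lr0.2 σ τ α (hRtp lr0 hlr0).2 (fun x hx => hocc x (hvars x hx))
      have hgeq : geval I (lr0.2.subst τ) = geval I sp := by
        have h1 : geval I (lr0.2.subst τ) = lr0.2.eval I α :=
          geval_subst_eq I τ lr0.2 (fun x hx => (hocc x (hvars x hx)).2)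
        rw [h1, hgsp]
        exact heq.symm
      obtain ⟨s', hs'repl, hreps', _⟩ := Rep_replace hmu hrep hrepl hsp hra hgeq
      refine ⟨s', hreps', Or.inl ⟨p, ⟨lr0, hlr0, τ, ?_, hs'repl⟩, ?_⟩⟩
      · rw [hsp, hsps]
      · intro q hq hqne sq hsq
        exact nonredex_above hcomplete hmu hrep q hq hqne sq hsq
    · -- value-changing rule application: a ∇ is created, shadow unchanged
      have hinner : Rep I tp R ((embL (labT I (fun _ a => a) α lr0.2)).subst σ)
          (lr0.2.subst τ) :=
        Rep_build lr0.2 σ τ α (hRtp lr0 hlr0).2 (fun x hx => hocc x (hvars x hx))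
      have hout : OutAt R [] sp (lr0.2.subst τ) := by
        refine ⟨⟨lr0, hlr0, τ, ?_, ?_⟩, ?_⟩
        · simp only [Tm.subAt]
          rw [hsps]
        · simp only [Tm.replaceAt]
        · intro q hq hqne
          exact absurd (List.prefix_nil.mp hq) hqne
      have hra : Rep I tp R (lr.2.subst σ) sp := by
        rw [hl2]
        show Rep I tp R (Tm.app (Sum.inr (lr0.1.eval I α, lr0.2.eval I α)) _) sp
        refine Rep.nab _ _ _ sp (lr0.2.subst τ) [] hout ?_ ?_ (Rep_tpFree hrsp)
        · exact hinner
        · exact geval_subst_eq I τ lr0.2 (fun x hx => (hocc x (hvars x hx)).2)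
      obtain ⟨s', hs'repl, hreps', _⟩ := Rep_replace hmu hrep hrepl hsp hra rfl
      have hss : s' = s := by
        have h2 := replaceAt_self p s sp hsp
        rw [h2] at hs'repl
        exact (Option.some.inj hs'repl).symm
      refine ⟨s', hreps', Or.inr ⟨hss, ?_⟩⟩
      have hlc := lc_replace hmu hsub hrepl
      have h1 : 1 ≤ lc (lr.1.subst σ) := by
        rw [hl1, hL]
        simp only [labT, embL, Tm.subst, lc]
        omega
      have h2 : lc (lr.2.subst σ) = 0 := by
        rw [hl2]
        simp only [nabla, Tm.subst, lc]
      omega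
  · -- DLprp step
    obtain ⟨f, as, i, b, b', hVC, hasi, hred, hl1, hcase⟩ := hlr
    have hw : lr.1.subst σ = Tm.app (Sum.inl ⟨f, as⟩)
        (fun j => if j = i then Tm.app (Sum.inr (b, b')) (fun _ => σ (i : ℕ)) else σ (j : ℕ)) := by
      rw [hl1]
      simp only [Tm.subst]
      congr 1
      funext j
      rcases eq_or_ne j i with h | h
      · simp [h, nabla, Tm.subst]
      · rw [if_neg h, if_neg h, Tm.subst]
    rw [hw] at hrsp
    cases hrsp with
    | node f1 as1 ts1 ss1 hne hr hl =>
      have hri : Rep I tp R (Tm.app (Sum.inr (b, b')) (fun _ => σ (i : ℕ))) (ss1 i) := by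
        have := hr i
        simpa using this
      cases hri with
      | nab b2 b2' ts2 s2 s2' p₀ hout hrep2 hval2 htf2 =>
        have hσi : Rep I tp R (σ (i : ℕ)) s2' := by simpa using hrep2
        obtain ⟨⟨lr1, hlr1, σ1, hsub1, hrepl1⟩, houter⟩ := hout
        have hlt : (i : ℕ) < ar f := i.isLt
        have hspsub : (Tm.app f ss1).subAt ((i : ℕ) :: p₀) = some (lr1.1.subst σ1) := by
          simp only [Tm.subAt, dif_pos hlt, Fin.eta]
          exact hsub1
        have hsprepl : (Tm.app f ss1).replaceAt ((i : ℕ) :: p₀) (lr1.2.subst σ1) =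
            some (Tm.app f (Function.update ss1 i s2')) := by
          simp only [Tm.replaceAt, dif_pos hlt, Fin.eta, hrepl1, Option.map_some]
        have hrepnode : Rep I tp R (lr.1.subst σ) (Tm.app f ss1) := by
          rw [hw]; exact Rep.node f as _ ss1 hne hr hl
        have hnrsp : ¬ IsRedex R (Tm.app f ss1) := nonredex_of_Rep hcomplete (hw ▸ hrepnode) hred
        have hnr : ∀ q, q <+: ((i : ℕ) :: p₀) → q ≠ ((i : ℕ) :: p₀) →
            ∀ sq, (Tm.app f ss1).subAt q = some sq → ¬ IsRedex R sq := by
          intro q hq hqne sq hsq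
          cases q with
          | nil =>
            simp only [Tm.subAt] at hsq
            cases hsq
            exact hnrsp
          | cons j q' =>
            obtain ⟨hj, hq'⟩ := List.cons_prefix_cons.mp hq
            subst hj
            simp only [Tm.subAt, dif_pos hlt, Fin.eta] at hsq
            exact houter q' hq' (fun hc => hqne (by rw [hc])) sq hsq
        have hgsp : geval I (Tm.app f ss1) = I f as :=
          geval_of_Rep_node (hw ▸ hrepnode)
        have hgs'' : geval I (Tm.app f (Function.update ss1 i s2')) =
            I f (Function.update as i b') := by
          show I f (fun j => geval I (Function.update ss1 i s2' j)) = _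
          congr 1
          funext j
          rcases eq_or_ne j i with h | h
          · subst h
            simp only [Function.update_self]
            exact hval2
          · simp only [Function.update_of_ne h]
            exact (hl j).symm
        have hRepInner : Rep I tp R
            (Tm.app (Sum.inl ⟨f, Function.update as i b'⟩) (fun j => σ (j : ℕ)))
            (Tm.app f (Function.update ss1 i s2')) := by
          refine Rep.node f _ _ _ hne ?_ ?_
          · intro j
            rcases eq_or_ne j i with h | h
            · subst h
              simp only [Function.update_self]
              exact hσi
            · simp only [Function.update_of_ne h]
              have := hr j
              dsimp only at this
              split_ifs at this with h'
              · exact absurd h' h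
              · exact this
          · intro j
            rcases eq_or_ne j i with h | h
            · subst h
              simp only [Function.update_self]
              exact hval2.symm
            · simp only [Function.update_of_ne h]
              exact hl j
        rcases hcase with ⟨heq, hl2⟩ | ⟨hvne, hl2⟩
        · -- relabeling, no value change: pending outermost shadow step is performed
          have ha : lr.2.subst σ = Tm.app (Sum.inl ⟨f, Function.update as i b'⟩)
              (fun j => σ (j : ℕ)) := by
            rw [hl2]
            simp only [Tm.subst]
          have hgeq : geval I (Tm.app f (Function.update ss1 i s2')) = geval I (Tm.app f ss1) := by
            rw [hgs'', hgsp]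
            exact heq.symm
          have hra : Rep I tp R (lr.2.subst σ) (Tm.app f (Function.update ss1 i s2')) := by
            rw [ha]; exact hRepInner
          obtain ⟨s', hs'repl, hreps', _⟩ := Rep_replace hmu hrep hrepl hsp hra hgeq
          refine ⟨s', hreps', Or.inl ⟨p ++ ((i : ℕ) :: p₀), ⟨lr1, hlr1, σ1, ?_, ?_⟩, ?_⟩⟩
          · rw [subAt_append, hsp]
            exact hspsub
          · exact replaceAt_append p _ s (Tm.app f ss1) _ s' _ hsp hsprepl hs'repl
          · intro q hq hqne sq hsq
            rcases prefix_append_cases p hq with hq1 | ⟨q', hq2, hq3⟩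
            · by_cases hqp : q = p
              · subst hqp
                rw [hsp] at hsq
                cases hsq
                exact hnrsp
              · exact nonredex_above hcomplete hmu hrep q hq1 hqp sq hsq
            · subst hq2
              cases q' with
              | nil =>
                rw [List.append_nil] at hsq
                rw [hsp] at hsq
                cases hsq
                exact hnrsp
              | cons j q'' =>
                obtain ⟨hj, hq''⟩ := List.cons_prefix_cons.mp hq3
                subst hj
                rw [subAt_append, hsp] at hsq
                simp only [Option.bind_some] at hsq
                exact hnr _ (List.cons_prefix_cons.mpr ⟨rfl, hq''⟩)
                  (fun hc => hqne (by rw [hc])) sq hsq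
        · -- relabeling with value change: the ∇ moves up, shadow unchanged
          have ha : lr.2.subst σ = Tm.app (Sum.inr (I f as, I f (Function.update as i b')))
              (fun _ => Tm.app (Sum.inl ⟨f, Function.update as i b'⟩) (fun j => σ (j : ℕ))) := by
            rw [hl2]
            simp only [nabla, Tm.subst]
          have houtsp : OutAt R ((i : ℕ) :: p₀) (Tm.app f ss1) (Tm.app f (Function.update ss1 i s2')) :=
            ⟨⟨lr1, hlr1, σ1, hspsub, hsprepl⟩, hnr⟩
          have hra : Rep I tp R (lr.2.subst σ) (Tm.app f ss1) := by
            rw [ha]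
            refine Rep.nab _ _ _ (Tm.app f ss1) (Tm.app f (Function.update ss1 i s2')) ((i : ℕ) :: p₀)
              houtsp ?_ hgs'' (Rep_tpFree hrepnode)
            exact hRepInner
          obtain ⟨s', hs'repl, hreps', _⟩ := Rep_replace hmu hrep hrepl hsp hra rfl
          have hss : s' = s := by
            have h2 := replaceAt_self p s (Tm.app f ss1) hsp
            rw [h2] at hs'repl
            exact (Option.some.inj hs'repl).symm
          refine ⟨s', hreps', Or.inr ⟨hss, ?_⟩⟩
          have hlc := lc_replace hmu hsub hrepl
          have h1 : 1 ≤ lc (lr.1.subst σ) := by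
            rw [hw]
            simp only [lc]
            omega
          have h2 : lc (lr.2.subst σ) = 0 := by
            rw [ha]
            simp only [lc]
          omega

end Sim

end TRSStmt
namespace Stmt

open TRSStmt

/-- Theorem 6.14: for a left-linear TRS `R` and a complete, maximal,
    core C-labeling, outermost ground termination of `R` implies that the dynamic
    labeling `DL(A,λ,R)` is terminating on the set of correctly labeled ground terms
    `lab(T(Σ,∅))`. -/
theorem dl_complete {F : Type} {ar : F → ℕ} {A : Type}
    (I : (f : F) → (Fin (ar f) → A) → A)
    (tp : F) (htp : ar tp = 1)
    (htpconst : ∀ as as' : Fin (ar tp) → A, I tp as = I tp as')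
    (R : Set (Rule F ar ℕ)) (hTRS : IsTRS R) (hfin : R.Finite)
    (hRtp : ∀ lr ∈ R, tpFree tp lr.1 ∧ tpFree tp lr.2)
    (hll : ∀ lr ∈ R, Linear lr.1)
    (hcmodel : IsCModel I R)
    -- the maximal labeling: `λ_f(a₁,…,aₙ) = (a₁,…,aₙ)`
    (Sred : Set (LSym F (fun f => Fin (ar f) → A)))
    (hSred : ∀ g ∈ Sred, g.1 ≠ tp)
    (hcomplete : CompleteLab I (fun _ a => a) tp R Sred)
    (hcore : CoreAlg I tp)
    (hOGT : OGTtp R tp) :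
    ¬ ∃ (t0 : Tm F ar Empty)
        (g : ℕ → Tm (DSym F (fun f => Fin (ar f) → A) A) (dar ar) Empty),
      tpFree tp t0 ∧
      g 0 = embL (glab I (fun _ a => a) t0) ∧
      ∀ n, MuStep (DLorg I (fun _ a => a) R ∪ DLprp I (fun _ a => a) R Sred)
             (dlMu Sred) (g n) (g (n + 1)) := by
  rintro ⟨t0, g, ht0, hg0, hstep⟩
  classical
  have hRep0 : Rep I tp R (g 0) t0 := by rw [hg0]; exact Rep_lab t0 ht0
  have hSim : ∀ n (s : Tm F ar Empty), Rep I tp R (g n) s →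
      ∃ s', Rep I tp R (g (n + 1)) s' ∧
        (OStep R s s' ∨ (s' = s ∧ lc (g (n + 1)) < lc (g n))) :=
    fun n s hs => Sim hTRS hRtp hll hcomplete hs (hstep n)
  choose fnext hf1 hf2 using hSim
  let S : ∀ n, {s : Tm F ar Empty // Rep I tp R (g n) s} := fun n =>
    Nat.rec ⟨t0, hRep0⟩ (fun n prev => ⟨fnext n prev.1 prev.2, hf1 n prev.1 prev.2⟩) n
  have hSstep : ∀ n, OStep R (S n).1 (S (n + 1)).1 ∨
      ((S (n + 1)).1 = (S n).1 ∧ lc (g (n + 1)) < lc (g n)) := by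
    intro n
    have hSn : S (n + 1) = ⟨fnext n (S n).1 (S n).2, hf1 n (S n).1 (S n).2⟩ := rfl
    rw [hSn]
    exact hf2 n (S n).1 (S n).2
  set P : ℕ → Prop := fun n => OStep R (S n).1 (S (n + 1)).1 with hPdef
  by_cases hinf : ∀ N, ∃ n, N ≤ n ∧ P n
  · -- infinitely many genuine outermost steps of the shadow sequence
    haveI : ∀ N : ℕ, DecidablePred (fun n => N ≤ n ∧ P n) := fun _ _ => Classical.dec _
    let e : ℕ → ℕ := fun k =>
      Nat.rec (Nat.find (hinf 0)) (fun _ prev => Nat.find (hinf (prev + 1))) k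
    have heS : ∀ k, e (k + 1) = Nat.find (hinf (e k + 1)) := fun k => rfl
    have hespec : ∀ k, P (e k) := by
      intro k
      cases k with
      | zero => exact (Nat.find_spec (hinf 0)).2
      | succ k =>
        rw [heS k]
        exact (Nat.find_spec (hinf (e k + 1))).2
    have hegap : ∀ k, e k + 1 ≤ e (k + 1) := by
      intro k
      rw [heS k]
      exact (Nat.find_spec (hinf (e k + 1))).1
    have hmin : ∀ k j, e k + 1 ≤ j → j < e (k + 1) → ¬ P j := by
      intro k j h1 h2 hPj
      rw [heS k] at h2
      exact Nat.find_min (hinf (e k + 1)) h2 ⟨h1, hPj⟩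
    have hconst : ∀ a d, (∀ j, a ≤ j → j < a + d → ¬ P j) → (S (a + d)).1 = (S a).1 := by
      intro a d
      induction d with
      | zero => intro _; rfl
      | succ d ih =>
        intro h
        rcases hSstep (a + d) with hO | ⟨he, _⟩
        · exact absurd hO (h (a + d) (Nat.le_add_right a d) (by omega))
        · have h1 : a + (d + 1) = (a + d) + 1 := by omega
          rw [h1, he]
          exact ih (fun j hj1 hj2 => h j hj1 (by omega))
    have hOS : ∀ k, OStep R (S (e k)).1 (S (e (k + 1))).1 := by
      intro k
      have h1 : OStep R (S (e k)).1 (S (e k + 1)).1 := hespec k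
      have h2 : (S (e (k + 1))).1 = (S (e k + 1)).1 := by
        have hgap := hegap k
        have h3 := hconst (e k + 1) (e (k + 1) - (e k + 1))
          (fun j hj1 hj2 => hmin k j hj1 (by omega))
        rw [show e k + 1 + (e (k + 1) - (e k + 1)) = e (k + 1) by omega] at h3
        exact h3
      rw [← h2] at h1
      exact h1
    exact hOGT ⟨fun k => (S (e k)).1, fun k => Rep_tpFree (S (e k)).2, hOS⟩
  · -- eventually only balancing steps: the live-node count decreases forever
    push_neg at hinf
    obtain ⟨N, hN⟩ := hinf
    have hdec : ∀ k, lc (g (N + k)) + k ≤ lc (g N) := by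
      intro k
      induction k with
      | zero => simp
      | succ k ih =>
        rcases hSstep (N + k) with hO | ⟨_, hlt⟩
        · exact absurd hO (hN (N + k) (Nat.le_add_right N k))
        · have h1 : N + (k + 1) = (N + k) + 1 := by omega
          rw [h1]
          omega
    have := hdec (lc (g N) + 1)
    omega

end Stmt
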